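/- arXiv:2302.13067 — 3 statements merged into one kernel-verified Lean document; each statement's English description precedes it below -/
import Mathlib

section
/- Let f be a strictly decreasing function and define K(x,y) = f(||x-y||) on the unit sphere S^d in R^{d+1}. If a sequence (x_n) is constructed greedily, i.e., x_{n+1} minimizes the sum over i ≤ n of K(x, x_i) over x in S^d, starting from a single initial point x_1, then for all k ≥ 1, x_{2k} = -x_{2k-1}. -/
open Finset

open scoped RealInnerProductSpace

private lemma sum_icc_top (n : ℕ) (g : ℕ → ℝ) :
    ∑ i ∈ Finset.Icc 1 (n + 1), g i = (∑ i ∈ Finset.Icc 1 n, g i) + g (n + 1) := by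
  have h : Finset.Icc 1 (n + 1) = insert (n + 1) (Finset.Icc 1 n) := by
    ext i; simp only [Finset.mem_Icc, Finset.mem_insert]; omega
  rw [h, Finset.sum_insert (by simp)]
  ring

private lemma sum_pairs (j : ℕ) (g : ℕ → ℝ) :
    ∑ i ∈ Finset.Icc 1 (2 * j), g i
      = ∑ l ∈ Finset.Icc 1 j, (g (2 * l - 1) + g (2 * l)) := by
  induction j with
  | zero => simp
  | succ j ih =>
    have h1 : 2 * (j + 1) = (2 * j + 1) + 1 := by ring
    rw [h1, sum_icc_top, sum_icc_top, ih,
      sum_icc_top j (fun l => g (2 * l - 1) + g (2 * l))]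
    have h2 : 2 * (j + 1) - 1 = 2 * j + 1 := by omega
    have h3 : 2 * (j + 1) = 2 * j + 1 + 1 := by ring
    have h4 : 2 * j + 1 + 1 - 1 = 2 * j + 1 := by omega
    simp only [h2, h3, h4]
    ring

private lemma eq_neg_of_norm_sub_eq_two {d : ℕ} (u v : EuclideanSpace ℝ (Fin (d + 1)))
    (hu : ‖u‖ = 1) (hv : ‖v‖ = 1) (h : ‖u - v‖ = 2) : u = -v := by
  have h1 : ‖u - v‖ ^ 2 = 4 := by rw [h]; norm_num
  rw [norm_sub_sq_real, hu, hv] at h1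
  have h2 : ⟪u, -v⟫ = 1 := by rw [inner_neg_right]; linarith
  exact (inner_eq_one_iff_of_norm_eq_one hu (by rw [norm_neg]; exact hv)).mp h2

/-- If `f` is strictly decreasing on `[0,2]`, `K x y = f ‖x - y‖` on the unit sphere
`S^d ⊂ ℝ^{d+1}`, and the sequence `x 1, x 2, ...` is greedy (each `x (n+1)` minimizes the
total potential with respect to `x 1, ..., x n`), then `x (2k) = - x (2k-1)` for all `k ≥ 1`. -/
theorem greedy_antipodal (d : ℕ) (f : ℝ → ℝ)
    (hf : StrictAntiOn f (Set.Icc (0 : ℝ) 2))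
    (x : ℕ → EuclideanSpace ℝ (Fin (d + 1)))
    (hx : ∀ n, 1 ≤ n → ‖x n‖ = 1)
    (hgreedy : ∀ n, 1 ≤ n → ∀ y : EuclideanSpace ℝ (Fin (d + 1)), ‖y‖ = 1 →
      ∑ i ∈ Finset.Icc 1 n, f ‖x (n + 1) - x i‖ ≤ ∑ i ∈ Finset.Icc 1 n, f ‖y - x i‖) :
    ∀ k, 1 ≤ k → x (2 * k) = - x (2 * k - 1) := by
  intro k
  induction k using Nat.strong_induction_on with
  | _ k ih =>
    intro hk
    obtain ⟨j, rfl⟩ : ∃ j, k = j + 1 := ⟨k - 1, by omega⟩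
    have hpairx : ∀ l, 1 ≤ l → l ≤ j → x (2 * l) = - x (2 * l - 1) := by
      intro l h1 h2
      exact ih l (by omega) h1
    set a := x (2 * j + 1) with ha_def
    have ha : ‖a‖ = 1 := hx _ (by omega)
    set b := x (2 * j + 2) with hb_def
    have hb : ‖b‖ = 1 := hx _ (by omega)
    -- evenness of the potential of the first 2j points
    have heven : ∀ y : EuclideanSpace ℝ (Fin (d + 1)),
        ∑ i ∈ Finset.Icc 1 (2 * j), f ‖(-y) - x i‖
          = ∑ i ∈ Finset.Icc 1 (2 * j), f ‖y - x i‖ := by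
      intro y
      rw [sum_pairs, sum_pairs]
      refine Finset.sum_congr rfl ?_
      intro l hl
      simp only [Finset.mem_Icc] at hl
      have hx2l : x (2 * l) = - x (2 * l - 1) := hpairx l hl.1 hl.2
      have e1 : (-y) - x (2 * l - 1) = -(y - x (2 * l)) := by rw [hx2l]; abel
      have e2 : (-y) - x (2 * l) = -(y - x (2 * l - 1)) := by rw [hx2l]; abel
      rw [e1, e2, norm_neg, norm_neg]
      ring
    -- minimality of a for the potential of the first 2j points
    have hPmin : ∀ y : EuclideanSpace ℝ (Fin (d + 1)), ‖y‖ = 1 →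
        ∑ i ∈ Finset.Icc 1 (2 * j), f ‖a - x i‖
          ≤ ∑ i ∈ Finset.Icc 1 (2 * j), f ‖y - x i‖ := by
      intro y hy
      rcases Nat.eq_zero_or_pos j with hj | hj
      · subst hj; simp
      · exact hgreedy (2 * j) (by omega) y hy
    -- greedy inequality at step 2j+1, compared with -a
    have hmain := hgreedy (2 * j + 1) (by omega) (-a) (by rw [norm_neg]; exact ha)
    rw [sum_icc_top (2 * j) (fun i => f ‖x (2 * j + 1 + 1) - x i‖),
      sum_icc_top (2 * j) (fun i => f ‖(-a) - x i‖)] at hmain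
    have hna : (-a) - a = (-2 : ℝ) • a := by module
    have hnorm2 : ‖(-a) - a‖ = 2 := by
      rw [hna, norm_smul, ha]; norm_num
    have hbb : x (2 * j + 1 + 1) = b := by rw [hb_def]
    rw [← ha_def] at hmain
    rw [hbb, hnorm2, heven a] at hmain
    have hPb := hPmin b hb
    have hfle : f ‖b - a‖ ≤ f 2 := by linarith
    -- hence ‖b - a‖ = 2
    have hle : ‖b - a‖ ≤ 2 := by
      calc ‖b - a‖ ≤ ‖b‖ + ‖a‖ := norm_sub_le b a
        _ = 2 := by rw [ha, hb]; norm_num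
    have heq : ‖b - a‖ = 2 := by
      by_contra hne
      have hlt : ‖b - a‖ < 2 := lt_of_le_of_ne hle hne
      have := hf ⟨norm_nonneg _, hle⟩ ⟨by norm_num, le_refl 2⟩ hlt
      linarith
    have hfin : b = -a := eq_neg_of_norm_sub_eq_two b a hb ha heq
    have h1 : 2 * (j + 1) = 2 * j + 2 := by ring
    have h2 : 2 * (j + 1) - 1 = 2 * j + 1 := by omega
    rw [h2, h1]
    exact hfin
end

section
/- Let x_{n+1} ∈ S^2 and {x_1,...,x_n} ⊂ S^2, and suppose every closed hemisphere of S^2 contains a point x with Σ_{i=1}^n ||x - x_i|| ≥ 4n/3 - X for some X ≥ 0. Then max_{x ∈ S^2} Σ_{i=1}^{n+1} ||x - x_i|| ≥ √2 + 4n/3 - X. -/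
open Finset Metric

/-- If every closed hemisphere of `S²` contains a point `x` with
`∑_{i=1}^n ‖x - x_i‖ ≥ 4n/3 - X`, then adding any further point `x_{n+1}` on `S²` yields
`max_{x ∈ S²} ∑_{i=1}^{n+1} ‖x - x_i‖ ≥ √2 + 4n/3 - X`. -/
theorem hemisphere_growth (n : ℕ) (X : ℝ) (hX : 0 ≤ X)
    (p : Fin (n + 1) → Metric.sphere (0 : EuclideanSpace ℝ (Fin 3)) 1)
    (hhemi : ∀ c : Metric.sphere (0 : EuclideanSpace ℝ (Fin 3)) 1,
      ∃ x : Metric.sphere (0 : EuclideanSpace ℝ (Fin 3)) 1,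
        (0:ℝ) ≤ inner ℝ (x : EuclideanSpace ℝ (Fin 3)) (c : EuclideanSpace ℝ (Fin 3)) ∧
        4 * n / 3 - X ≤ ∑ i : Fin n, ‖(x : EuclideanSpace ℝ (Fin 3)) - p i.castSucc‖) :
    ∃ x : Metric.sphere (0 : EuclideanSpace ℝ (Fin 3)) 1,
      Real.sqrt 2 + 4 * n / 3 - X ≤ ∑ i : Fin (n + 1), ‖(x : EuclideanSpace ℝ (Fin 3)) - p i‖ := by
  set q : EuclideanSpace ℝ (Fin 3) := (p (Fin.last n) : EuclideanSpace ℝ (Fin 3)) with hq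
  have hqmem : -q ∈ Metric.sphere (0 : EuclideanSpace ℝ (Fin 3)) 1 := by
    simp only [mem_sphere_iff_norm, sub_zero, norm_neg]
    have := (p (Fin.last n)).2
    simpa [hq] using this
  obtain ⟨x, hx1, hx2⟩ := hhemi ⟨-q, hqmem⟩
  refine ⟨x, ?_⟩
  rw [Fin.sum_univ_castSucc]
  have hxq : (inner ℝ (x : EuclideanSpace ℝ (Fin 3)) q : ℝ) ≤ 0 := by
    have : (0:ℝ) ≤ inner ℝ (x : EuclideanSpace ℝ (Fin 3)) (-q) := hx1
    rw [inner_neg_right] at this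
    linarith
  have hxn : ‖(x : EuclideanSpace ℝ (Fin 3))‖ = 1 := by
    simpa using x.2
  have hqn : ‖q‖ = 1 := by
    have := (p (Fin.last n)).2
    simpa [hq] using this
  have hdist : Real.sqrt 2 ≤ ‖(x : EuclideanSpace ℝ (Fin 3)) - q‖ := by
    have hsq : ‖(x : EuclideanSpace ℝ (Fin 3)) - q‖ ^ 2
        = 2 - 2 * inner ℝ (x : EuclideanSpace ℝ (Fin 3)) q := by
      rw [← real_inner_self_eq_norm_sq]
      rw [inner_sub_sub_self]
      rw [real_inner_self_eq_norm_sq, real_inner_self_eq_norm_sq, hxn, hqn,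
        real_inner_comm]
      ring
    have h2 : Real.sqrt 2 = Real.sqrt 2 := rfl
    rw [show Real.sqrt 2 = Real.sqrt 2 from rfl]
    have : (2:ℝ) ≤ ‖(x : EuclideanSpace ℝ (Fin 3)) - q‖ ^ 2 := by
      rw [hsq]; linarith
    calc Real.sqrt 2 ≤ Real.sqrt (‖(x : EuclideanSpace ℝ (Fin 3)) - q‖ ^ 2) :=
          Real.sqrt_le_sqrt this
      _ = ‖(x : EuclideanSpace ℝ (Fin 3)) - q‖ := by
          rw [Real.sqrt_sq (norm_nonneg _)]
  linarith
end

section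
/- For 0 < s and integers n ≥ 0, with Gegenbauer coefficient defined by f̂(n,d) = [Γ((d+1)/2) n! Γ(d-1)] / [√π Γ(d/2) Γ(n+d-1)] · ∫_{-1}^1 f(t) C_n^{(d-1)/2}(t) (1-t²)^{(d-2)/2} dt, the coefficients of f_{s,ε}(t) = (2 + ε - 2t)^{-s/2} are positive for every ε > 0. -/
open Real

/-- The Gegenbauer (ultraspherical) polynomials `C_n^λ`, defined by the standard three-term
recurrence `C_0 = 1`, `C_1(t) = 2λt`, `(n+2) C_{n+2}(t) = 2(n+1+λ) t C_{n+1}(t) - (n+2λ) C_n(t)`. -/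
noncomputable def gegenbauerFn (lam : ℝ) : ℕ → ℝ → ℝ
  | 0, _ => 1
  | 1, t => 2 * lam * t
  | (n + 2), t => (2 * ((n : ℝ) + 1 + lam) * t * gegenbauerFn lam (n + 1) t
      - ((n : ℝ) + 2 * lam) * gegenbauerFn lam n t) / ((n : ℝ) + 2)

/-- The `n`-th Gegenbauer coefficient of a function `f : [-1,1] → ℝ` on `S^d`:
`f̂(n,d) = [Γ((d+1)/2) n! Γ(d-1)] / [√π Γ(d/2) Γ(n+d-1)] ·
  ∫_{-1}^1 f(t) C_n^{(d-1)/2}(t) (1-t²)^{(d-2)/2} dt`. -/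
noncomputable def gegenbauerCoeff (f : ℝ → ℝ) (n d : ℕ) : ℝ :=
  (Real.Gamma (((d : ℝ) + 1) / 2) * (Nat.factorial n) * Real.Gamma ((d : ℝ) - 1)) /
      (Real.sqrt π * Real.Gamma ((d : ℝ) / 2) * Real.Gamma ((n : ℝ) + (d : ℝ) - 1)) *
    ∫ t in (-1 : ℝ)..1,
      f t * gegenbauerFn (((d : ℝ) - 1) / 2) n t * (1 - t ^ 2) ^ (((d : ℝ) - 2) / 2)

lemma G_zero (lam t : ℝ) : gegenbauerFn lam 0 t = 1 := rfl
lemma G_one (lam t : ℝ) : gegenbauerFn lam 1 t = 2 * lam * t := rfl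
lemma G_rec (lam t : ℝ) (n : ℕ) : gegenbauerFn lam (n+2) t = (2 * ((n : ℝ) + 1 + lam) * t * gegenbauerFn lam (n + 1) t
      - ((n : ℝ) + 2 * lam) * gegenbauerFn lam n t) / ((n : ℝ) + 2) := rfl

lemma C1C5 (μ t : ℝ) (n : ℕ) :
    ((n:ℝ)+2) * gegenbauerFn μ (n+2) t
      = 2*μ*(t * gegenbauerFn (μ+1) (n+1) t - gegenbauerFn (μ+1) n t) ∧
    2*μ*(gegenbauerFn (μ+1) (n+1) t - t * gegenbauerFn (μ+1) n t)
      = ((n:ℝ)+1+2*μ) * gegenbauerFn μ (n+1) t := by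
  induction n with
  | zero =>
      constructor
      · rw [G_rec]
        norm_num [G_one, G_zero]
        ring
      · norm_num [G_one, G_zero]
        ring
  | succ n ih =>
      obtain ⟨h1, h5⟩ := ih
      have hr : ((n:ℝ)+3) * gegenbauerFn μ (n+3) t
          = 2*((n:ℝ)+2+μ)*t*gegenbauerFn μ (n+2) t - ((n:ℝ)+1+2*μ)*gegenbauerFn μ (n+1) t := by
        rw [show n+3 = (n+1)+2 from rfl, G_rec]
        push_cast
        have : ((n:ℝ)+1+2) ≠ 0 := by positivity
        field_simp
        ring
      have hr' : ((n:ℝ)+2) * gegenbauerFn (μ+1) (n+2) t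
          = 2*((n:ℝ)+2+μ)*t*gegenbauerFn (μ+1) (n+1) t - ((n:ℝ)+2+2*μ)*gegenbauerFn (μ+1) n t := by
        rw [G_rec]
        have : ((n:ℝ)+2) ≠ 0 := by positivity
        field_simp
        ring
      have h2 : ((n:ℝ)+2) ≠ 0 := by positivity
      have e1 : n+1+1 = n+2 := rfl
      have e2 : n+1+2 = n+3 := rfl
      constructor
      · rw [e1, e2]
        refine mul_left_cancel₀ h2 ?_
        push_cast
        linear_combination ((n:ℝ)+2)*hr + 2*((n:ℝ)+2+μ)*t*h1 + ((n:ℝ)+2)*h5 - 2*μ*t*hr'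
      · rw [e1]
        refine mul_left_cancel₀ h2 ?_
        push_cast
        linear_combination 2*μ*hr' - ((n:ℝ)+2+2*μ)*h1

lemma C1s (μ t : ℝ) (n : ℕ) : ((n:ℝ)+2) * gegenbauerFn μ (n+2) t
    = 2*μ*(t * gegenbauerFn (μ+1) (n+1) t - gegenbauerFn (μ+1) n t) := (C1C5 μ t n).1

lemma C5s (μ t : ℝ) (n : ℕ) : 2*μ*(gegenbauerFn (μ+1) (n+1) t - t * gegenbauerFn (μ+1) n t)
    = ((n:ℝ)+1+2*μ) * gegenbauerFn μ (n+1) t := (C1C5 μ t n).2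

lemma C2s (μ t : ℝ) (n : ℕ) :
    2*μ*(1-t^2)*gegenbauerFn (μ+1) n t
      = -((n:ℝ)+1)*t*gegenbauerFn μ (n+1) t + ((n:ℝ)+2*μ)*gegenbauerFn μ n t := by
  cases n with
  | zero =>
      norm_num [G_zero, G_one]
      ring
  | succ m =>
      have h1 := C1s μ t m
      have h5 := C5s μ t m
      have e : m+1+1 = m+2 := rfl
      rw [e]
      push_cast
      linear_combination t*h1 + h5

/-- Formal derivative of the Gegenbauer polynomial. -/
noncomputable def dG (μ : ℝ) : ℕ → ℝ → ℝ
  | 0, _ => 0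
  | (n+1), t => 2*μ*gegenbauerFn (μ+1) n t

lemma C3s (μ t : ℝ) (n : ℕ) :
    ((n:ℝ)+2) * (2*μ*gegenbauerFn (μ+1) (n+1) t)
      = 2*((n:ℝ)+1+μ)*(gegenbauerFn μ (n+1) t + t * dG μ (n+1) t)
        - ((n:ℝ)+2*μ) * dG μ n t := by
  cases n with
  | zero =>
      norm_num [dG, G_one, G_zero]
      ring
  | succ m =>
      have h1 := C1s μ t m
      have h5b := C5s μ t (m+1)
      have e : m+1+1 = m+2 := rfl
      rw [e] at h5b ⊢
      simp only [dG]
      push_cast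
      push_cast at h5b
      linear_combination ((m:ℝ)+3)*h5b + ((m:ℝ)+1+2*μ)*h1

lemma hasDerivAt_G (μ : ℝ) : ∀ (n : ℕ) (t : ℝ), HasDerivAt (fun x => gegenbauerFn μ n x) (dG μ n t) t := by
  have key : ∀ n : ℕ, (∀ t, HasDerivAt (fun x => gegenbauerFn μ n x) (dG μ n t) t)
      ∧ (∀ t, HasDerivAt (fun x => gegenbauerFn μ (n+1) x) (dG μ (n+1) t) t) := by
    intro n
    induction n with
    | zero =>
        constructor
        · intro t
          simp only [G_zero, dG]
          exact hasDerivAt_const t 1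
        · intro t
          simp only [G_one, dG, G_zero, mul_one]
          exact ((hasDerivAt_id t).const_mul (2*μ)).congr_deriv (by simp)
    | succ n ih =>
        obtain ⟨hA, hB⟩ := ih
        refine ⟨hB, fun t => ?_⟩
        have h1 : HasDerivAt (fun x => 2*((n:ℝ)+1+μ)*x) (2*((n:ℝ)+1+μ)) t := by
          simpa using (hasDerivAt_id t).const_mul (2*((n:ℝ)+1+μ))
        have hprod := h1.mul (hB t)
        have hsub := hprod.sub ((hA t).const_mul ((n:ℝ)+2*μ))
        have hdiv := hsub.div_const ((n:ℝ)+2)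
        have hfe : (fun x => (2*((n:ℝ)+1+μ)*x * gegenbauerFn μ (n+1) x
            - ((n:ℝ)+2*μ) * gegenbauerFn μ n x) / ((n:ℝ)+2))
            = fun x => gegenbauerFn μ (n+2) x := by
          funext x; rw [G_rec]
        simp only [Pi.mul_apply, Pi.sub_apply] at hdiv
        rw [hfe] at hdiv
        refine hdiv.congr_deriv ?_
        symm
        have h3 := C3s μ t n
        have hn2 : ((n:ℝ)+2) ≠ 0 := by positivity
        show dG μ (n+2) t = _
        simp only [dG] at h3 ⊢
        field_simp
        linear_combination h3
  exact fun n => (key n).1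

lemma cont_G (μ : ℝ) (n : ℕ) : Continuous (fun t => gegenbauerFn μ n t) :=
  continuous_iff_continuousAt.2 fun t => (hasDerivAt_G μ n t).differentiableAt.continuousAt

lemma contW {e : ℝ} (he : 0 ≤ e) : Continuous (fun x : ℝ => (1-x^2)^e) := by
  have h : Continuous fun x : ℝ => 1 - x^2 := by continuity
  exact continuous_iff_continuousAt.2 fun x =>
    (Real.continuousAt_rpow_const _ _ (Or.inr he)).comp h.continuousAt

lemma bracket (μ t : ℝ) (n : ℕ) :
    2*μ*((1-t^2) * dG (μ+1) n t - 2*t*(μ+1/2) * gegenbauerFn (μ+1) n t)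
      = -(((n:ℝ)+1)*((n:ℝ)+1+2*μ)) * gegenbauerFn μ (n+1) t := by
  cases n with
  | zero =>
      norm_num [dG, G_zero, G_one]
      ring
  | succ m =>
      have hC2 := C2s (μ+1) t m
      have h1 := C1s μ t m
      have e : m+1+1 = m+2 := rfl
      rw [e]
      simp only [dG]
      push_cast
      linear_combination 2*μ*hC2 + ((m:ℝ)+2+2*μ)*h1

lemma keyDeriv (μ : ℝ) (hμ : 0 < μ) (n : ℕ) {t : ℝ} (ht : t ∈ Set.Ioo (-1:ℝ) 1) :
    HasDerivAt (fun x => (1-x^2)^(μ+1/2) * gegenbauerFn (μ+1) n x)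
      (-((((n:ℝ)+1)*((n:ℝ)+1+2*μ))/(2*μ)) * ((1-t^2)^(μ-1/2) * gegenbauerFn μ (n+1) t)) t := by
  have h1t : 0 < 1 - t^2 := by
    obtain ⟨h1, h2⟩ := ht
    nlinarith
  have hin : HasDerivAt (fun x : ℝ => 1 - x^2) (-(2*t)) t := by
    exact ((hasDerivAt_const t (1:ℝ)).sub (hasDerivAt_pow 2 t)).congr_deriv (by simp)
  have hw : HasDerivAt (fun x : ℝ => (1-x^2)^(μ+1/2))
      ((-(2*t)) * (μ+1/2) * (1-t^2)^(μ+1/2-1)) t :=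
    hin.rpow_const (Or.inl h1t.ne')
  have hg := hasDerivAt_G (μ+1) n t
  have hprod := hw.mul hg
  refine hprod.congr_deriv ?_
  symm
  have hb := bracket μ t n
  have hexp1 : (1-t^2)^(μ+1/2-1) = (1-t^2)^(μ-1/2) := by
    rw [show μ+1/2-1 = μ-1/2 by ring]
  have hexp2 : (1-t^2)^(μ+1/2) = (1-t^2) * (1-t^2)^(μ-1/2) := by
    rw [show μ+1/2 = 1 + (μ-1/2) by ring, Real.rpow_add h1t, Real.rpow_one]
  rw [hexp1, hexp2]
  set W := (1-t^2)^(μ-1/2) with hW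
  have h2μ : (2*μ) ≠ 0 := by positivity
  field_simp
  linear_combination (-W) * hb

lemma ibp_step (μ : ℝ) (hμ : (1:ℝ)/2 ≤ μ) (n : ℕ) (f f' : ℝ → ℝ)
    (hf : ∀ t ∈ Set.Icc (-1:ℝ) 1, HasDerivAt f (f' t) t)
    (hf' : ContinuousOn f' (Set.Icc (-1:ℝ) 1)) :
    ∫ t in (-1:ℝ)..1, f t * gegenbauerFn μ (n+1) t * (1-t^2)^(μ-1/2)
      = (2*μ/(((n:ℝ)+1)*((n:ℝ)+1+2*μ)))
        * ∫ t in (-1:ℝ)..1, f' t * gegenbauerFn (μ+1) n t * (1-t^2)^(μ+1/2) := by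
  have hμ0 : 0 < μ := lt_of_lt_of_le (by norm_num) hμ
  set K : ℝ := ((n:ℝ)+1)*((n:ℝ)+1+2*μ) with hK
  have hKpos : 0 < K := by positivity
  have huIcc : Set.uIcc (-1:ℝ) 1 = Set.Icc (-1:ℝ) 1 := Set.uIcc_of_le (by norm_num)
  have hfc : ContinuousOn f (Set.Icc (-1:ℝ) 1) :=
    fun t ht => (hf t ht).continuousAt.continuousWithinAt
  have hwc : Continuous (fun x : ℝ => (1-x^2)^(μ-1/2)) := contW (by linarith)
  have hwc' : Continuous (fun x : ℝ => (1-x^2)^(μ+1/2)) := contW (by linarith)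
  -- the function to differentiate
  set H : ℝ → ℝ := fun x => f x * ((1-x^2)^(μ+1/2) * gegenbauerFn (μ+1) n x) with hH
  set A : ℝ → ℝ := fun x => f' x * ((1-x^2)^(μ+1/2) * gegenbauerFn (μ+1) n x) with hA
  set B : ℝ → ℝ := fun x => f x * (-(K/(2*μ)) * ((1-x^2)^(μ-1/2) * gegenbauerFn μ (n+1) x)) with hB
  have hAc : ContinuousOn A (Set.Icc (-1:ℝ) 1) :=
    hf'.mul ((hwc'.mul (cont_G (μ+1) n)).continuousOn)
  have hBc : ContinuousOn B (Set.Icc (-1:ℝ) 1) :=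
    hfc.mul ((continuous_const.mul (hwc.mul (cont_G μ (n+1)))).continuousOn)
  have hAi : IntervalIntegrable A MeasureTheory.volume (-1) 1 :=
    (hAc.mono (le_of_eq huIcc)).intervalIntegrable
  have hBi : IntervalIntegrable B MeasureTheory.volume (-1) 1 :=
    (hBc.mono (le_of_eq huIcc)).intervalIntegrable
  have hHc : ContinuousOn H (Set.Icc (-1:ℝ) 1) :=
    hfc.mul ((hwc'.mul (cont_G (μ+1) n)).continuousOn)
  have hderiv : ∀ x ∈ Set.Ioo (-1:ℝ) 1, HasDerivWithinAt H (A x + B x) (Set.Ioi x) x := by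
    intro x hx
    have h1 := (hf x (Set.Ioo_subset_Icc_self hx)).mul (keyDeriv μ hμ0 n hx)
    simp only [hH, hA, hB]
    have : HasDerivAt H (f' x * ((1-x^2)^(μ+1/2) * gegenbauerFn (μ+1) n x)
        + f x * (-(K/(2*μ)) * ((1-x^2)^(μ-1/2) * gegenbauerFn μ (n+1) x))) x := by
      exact h1
    exact this.hasDerivWithinAt
  have hint : ∫ y in (-1:ℝ)..1, (A y + B y) = H 1 - H (-1) :=
    intervalIntegral.integral_eq_sub_of_hasDeriv_right_of_le (by norm_num) hHc hderiv
      (hAi.add hBi)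
  have hH1 : H 1 = 0 := by
    simp only [hH]
    norm_num [Real.zero_rpow (by positivity : μ+1/2 ≠ 0)]
  have hHm1 : H (-1) = 0 := by
    simp only [hH]
    norm_num [Real.zero_rpow (by positivity : μ+1/2 ≠ 0)]
  rw [intervalIntegral.integral_add hAi hBi, hH1, hHm1] at hint
  have hint2 : ∫ y in (-1:ℝ)..1, A y = (K/(2*μ)) * ∫ y in (-1:ℝ)..1,
      f y * gegenbauerFn μ (n+1) y * (1-y^2)^(μ-1/2) := by
    have hBe : ∫ y in (-1:ℝ)..1, B y = -(K/(2*μ)) * ∫ y in (-1:ℝ)..1,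
        f y * gegenbauerFn μ (n+1) y * (1-y^2)^(μ-1/2) := by
      rw [← intervalIntegral.integral_const_mul]
      apply intervalIntegral.integral_congr
      intro x hx
      simp only [hB]
      ring
    rw [hBe] at hint
    linarith [hint]
  have hAe : ∫ y in (-1:ℝ)..1, A y = ∫ t in (-1:ℝ)..1,
      f' t * gegenbauerFn (μ+1) n t * (1-t^2)^(μ+1/2) := by
    apply intervalIntegral.integral_congr
    intro x hx
    simp only [hA]
    ring
  rw [hAe] at hint2
  have h2μK : K ≠ 0 := ne_of_gt hKpos
  rw [hint2]
  field_simp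

lemma main_reduction : ∀ (n : ℕ) (μ : ℝ), (1:ℝ)/2 ≤ μ → ∀ (F : ℕ → ℝ → ℝ),
    (∀ k, ∀ t ∈ Set.Icc (-1:ℝ) 1, HasDerivAt (F k) (F (k+1) t) t) →
    ∃ c : ℝ, 0 < c ∧
      (∫ t in (-1:ℝ)..1, F 0 t * gegenbauerFn μ n t * (1-t^2)^(μ-1/2))
        = c * ∫ t in (-1:ℝ)..1, F n t * (1-t^2)^(μ+(n:ℝ)-1/2) := by
  intro n
  induction n with
  | zero =>
      intro μ hμ F hF
      refine ⟨1, one_pos, ?_⟩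
      rw [one_mul]
      apply intervalIntegral.integral_congr
      intro x hx
      simp [G_zero]
  | succ n ih =>
      intro μ hμ F hF
      have hcont1 : ContinuousOn (F 1) (Set.Icc (-1:ℝ) 1) :=
        fun t ht => (hF 1 t ht).continuousAt.continuousWithinAt
      have hstep := ibp_step μ hμ n (F 0) (F 1) (hF 0) hcont1
      obtain ⟨c, hc, heq⟩ := ih (μ+1) (by linarith) (fun k => F (k+1)) (fun k => hF (k+1))
      refine ⟨(2*μ/(((n:ℝ)+1)*((n:ℝ)+1+2*μ))) * c, ?_, ?_⟩
      · have hμ0 : 0 < μ := lt_of_lt_of_le (by norm_num) hμ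
        have : 0 < ((n:ℝ)+1)*((n:ℝ)+1+2*μ) := by positivity
        positivity
      · rw [hstep]
        have he1 : ∀ t : ℝ, (1-t^2)^(μ+1-1/2) = (1-t^2)^(μ+1/2) := by
          intro t; rw [show μ+1-1/2 = μ+1/2 by ring]
        have heq' : (∫ t in (-1:ℝ)..1, F 1 t * gegenbauerFn (μ+1) n t * (1-t^2)^(μ+1/2))
            = c * ∫ t in (-1:ℝ)..1, F (n+1) t * (1-t^2)^(μ+((n:ℕ):ℝ)+1-1/2) := by
          rw [show (∫ t in (-1:ℝ)..1, F 1 t * gegenbauerFn (μ+1) n t * (1-t^2)^(μ+1/2))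
              = ∫ t in (-1:ℝ)..1, F 1 t * gegenbauerFn (μ+1) n t * (1-t^2)^((μ+1)-1/2) by
            apply intervalIntegral.integral_congr; intro x hx; simp only [he1]]
          norm_num at heq
          rw [heq]
          congr 1
          apply intervalIntegral.integral_congr
          intro x hx
          rw [show μ+1+(n:ℝ)-1/2 = μ+(n:ℝ)+1-1/2 by ring]
        rw [heq']
        rw [show ((n+1:ℕ):ℝ) = (n:ℝ)+1 by push_cast; ring]
        rw [show μ+((n:ℝ)+1)-1/2 = μ+(n:ℝ)+1-1/2 by ring]
        ring

theorem gegenbauerCoeff_smoothedRiesz_pos' (d : ℕ) (hd : 2 ≤ d) (s ε : ℝ)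
    (hs : 0 < s) (hε : 0 < ε) (n : ℕ) :
    0 < (Real.Gamma (((d : ℝ) + 1) / 2) * (Nat.factorial n) * Real.Gamma ((d : ℝ) - 1)) /
      (Real.sqrt π * Real.Gamma ((d : ℝ) / 2) * Real.Gamma ((n : ℝ) + (d : ℝ) - 1)) *
    ∫ t in (-1 : ℝ)..1,
      (2 + ε - 2 * t) ^ (-(s / 2)) * gegenbauerFn (((d : ℝ) - 1) / 2) n t
        * (1 - t ^ 2) ^ (((d : ℝ) - 2) / 2) := by
  have hd2 : (2:ℝ) ≤ (d:ℝ) := by exact_mod_cast hd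
  set μ : ℝ := ((d:ℝ)-1)/2 with hμdef
  have hμ : (1:ℝ)/2 ≤ μ := by rw [hμdef]; linarith
  have hμ0 : 0 < μ := lt_of_lt_of_le (by norm_num) hμ
  -- the family of derivatives
  set F : ℕ → ℝ → ℝ := fun k t =>
    (∏ j ∈ Finset.range k, (s + 2*(j:ℝ))) * (2 + ε - 2*t) ^ (-(s/2) - (k:ℝ)) with hFdef
  have hP : ∀ k : ℕ, 0 < ∏ j ∈ Finset.range k, (s + 2*(j:ℝ)) := by
    intro k
    apply Finset.prod_pos
    intro j _
    positivity
  have hbase : ∀ t : ℝ, t ∈ Set.Icc (-1:ℝ) 1 → 0 < 2 + ε - 2*t := by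
    intro t ht
    have := ht.2
    nlinarith
  have hF : ∀ k, ∀ t ∈ Set.Icc (-1:ℝ) 1, HasDerivAt (F k) (F (k+1) t) t := by
    intro k t ht
    have hb := hbase t ht
    have hin : HasDerivAt (fun x : ℝ => 2 + ε - 2*x) (-2) t := by
      exact ((hasDerivAt_const t (2+ε)).sub ((hasDerivAt_id t).const_mul 2)).congr_deriv (by simp)
    have hr := hin.rpow_const (p := -(s/2) - (k:ℝ)) (Or.inl hb.ne')
    have hr2 := hr.const_mul (∏ j ∈ Finset.range k, (s + 2*(j:ℝ)))
    refine hr2.congr_deriv ?_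
    symm
    simp only [hFdef]
    rw [Finset.prod_range_succ]
    rw [show -(s/2) - ((k:ℕ)+1:ℕ) = (-(s/2) - (k:ℝ)) - 1 by push_cast; ring]
    ring
  obtain ⟨c, hc, heq⟩ := main_reduction n μ hμ F hF
  have hint_eq : (∫ t in (-1 : ℝ)..1,
      (2 + ε - 2 * t) ^ (-(s / 2)) * gegenbauerFn μ n t * (1 - t ^ 2) ^ (((d : ℝ) - 2) / 2))
      = ∫ t in (-1:ℝ)..1, F 0 t * gegenbauerFn μ n t * (1-t^2)^(μ-1/2) := by
    apply intervalIntegral.integral_congr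
    intro x hx
    simp only [hFdef, Finset.range_zero, Finset.prod_empty, one_mul, Nat.cast_zero]
    rw [show -(s/2) - (0:ℝ) = -(s/2) by ring, show ((d:ℝ)-2)/2 = μ - 1/2 by rw [hμdef]; ring]
  have hJ : 0 < ∫ t in (-1:ℝ)..1, F n t * (1-t^2)^(μ+(n:ℝ)-1/2) := by
    apply intervalIntegral.intervalIntegral_pos_of_pos_on
    · have huIcc : Set.uIcc (-1:ℝ) 1 = Set.Icc (-1:ℝ) 1 := Set.uIcc_of_le (by norm_num)
      apply ContinuousOn.intervalIntegrable
      rw [huIcc]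
      have h1 : ContinuousOn (F n) (Set.Icc (-1:ℝ) 1) :=
        fun t ht => (hF n t ht).continuousAt.continuousWithinAt
      exact h1.mul ((contW (by linarith [Nat.cast_nonneg (α := ℝ) n] :
        (0:ℝ) ≤ μ+(n:ℝ)-1/2)).continuousOn)
    · intro x hx
      have hb := hbase x (Set.Ioo_subset_Icc_self hx)
      have h1x : 0 < 1 - x^2 := by
        obtain ⟨h1, h2⟩ := hx
        nlinarith
      have := hP n
      have := Real.rpow_pos_of_pos hb (-(s/2) - (n:ℝ))
      have := Real.rpow_pos_of_pos h1x (μ+(n:ℝ)-1/2)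
      simp only [hFdef]
      positivity
    · norm_num
  have hI : 0 < ∫ t in (-1 : ℝ)..1,
      (2 + ε - 2 * t) ^ (-(s / 2)) * gegenbauerFn μ n t * (1 - t ^ 2) ^ (((d : ℝ) - 2) / 2) := by
    rw [hint_eq, heq]
    positivity
  have hC : 0 < (Real.Gamma (((d : ℝ) + 1) / 2) * (Nat.factorial n) * Real.Gamma ((d : ℝ) - 1)) /
      (Real.sqrt π * Real.Gamma ((d : ℝ) / 2) * Real.Gamma ((n : ℝ) + (d : ℝ) - 1)) := by
    have h1 : 0 < Real.Gamma (((d : ℝ) + 1) / 2) := Real.Gamma_pos_of_pos (by positivity)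
    have h2 : (0:ℝ) < Nat.factorial n := by exact_mod_cast Nat.factorial_pos n
    have h3 : 0 < Real.Gamma ((d : ℝ) - 1) := Real.Gamma_pos_of_pos (by linarith)
    have h4 : 0 < Real.sqrt π := Real.sqrt_pos.2 Real.pi_pos
    have h5 : 0 < Real.Gamma ((d : ℝ) / 2) := Real.Gamma_pos_of_pos (by linarith)
    have h6 : 0 < Real.Gamma ((n : ℝ) + (d : ℝ) - 1) :=
      Real.Gamma_pos_of_pos (by have := Nat.cast_nonneg (α := ℝ) n; linarith)
    positivity
  exact mul_pos hC hI

/-- For `s > 0`, `ε > 0` and `d ≥ 2`, all Gegenbauer coefficients of the smoothed Riesz kernel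
`f_{s,ε}(t) = (2 + ε - 2t)^{-s/2}` are positive. -/
theorem gegenbauerCoeff_smoothedRiesz_pos (d : ℕ) (hd : 2 ≤ d) (s ε : ℝ)
    (hs : 0 < s) (hε : 0 < ε) (n : ℕ) :
    0 < gegenbauerCoeff (fun t => (2 + ε - 2 * t) ^ (-(s / 2))) n d := by
  unfold gegenbauerCoeff
  exact gegenbauerCoeff_smoothedRiesz_pos' d hd s ε hs hε n
end
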